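/- Let p ≥ 5 be a prime and let r be an integer with 1 ≤ r ≤ p−1 such that 24r+1 is a quadratic nonresidue modulo p (i.e., there is no integer x with x^2 ≡ 24r+1 (mod p)). Then for all integers m ≥ 0, C̄_{6,2}(pm + r) ≡ 0 (mod 2). -/

import Mathlib

open Finset PowerSeries

namespace C62Aux


abbrev R2 := ZMod 2

def pc (N M : ℕ) : ℕ := ((Icc 1 M).powerset.filter (fun T => ∑ i ∈ T, i = N)).card

lemma subset_of_sum {N : ℕ} {T : Finset ℕ} (h0 : 0 ∉ T) (hs : ∑ i ∈ T, i = N) :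
    T ⊆ Icc 1 N := by
  intro x hx
  have hx1 : 1 ≤ x := Nat.one_le_iff_ne_zero.2 (by rintro rfl; exact h0 hx)
  have hx2 : x ≤ N := hs ▸ Finset.single_le_sum (f := fun i => i) (fun i _ => Nat.zero_le i) hx
  exact Finset.mem_Icc.2 ⟨hx1, hx2⟩

lemma pc_stab {N M : ℕ} (h : N ≤ M) : pc N M = pc N N := by
  unfold pc
  congr 1
  ext T
  simp only [mem_filter, Finset.mem_powerset]
  constructor
  · rintro ⟨hT, hs⟩
    have h0 : 0 ∉ T := fun h0 => by simpa using Finset.mem_Icc.1 (hT h0)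
    exact ⟨subset_of_sum h0 hs, hs⟩
  · rintro ⟨hT, hs⟩
    exact ⟨hT.trans (Finset.Icc_subset_Icc_right h), hs⟩

noncomputable def AM (M : ℕ) : PowerSeries R2 := ∏ i ∈ Icc 1 M, (1 + X ^ i)

lemma coeff_AM (N M : ℕ) : coeff (R := R2) N (AM M) = (pc N M : R2) := by
  have h : AM M = ∑ T ∈ (Icc 1 M).powerset, X ^ (∑ i ∈ T, i) := by
    unfold AM
    rw [show (∏ i ∈ Icc 1 M, (1 + (X:PowerSeries R2) ^ i))
        = ∏ i ∈ Icc 1 M, ((X:PowerSeries R2) ^ i + 1) from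
      Finset.prod_congr rfl fun i _ => add_comm _ _]
    rw [Finset.prod_add]
    refine Finset.sum_congr rfl fun T _ => ?_
    rw [Finset.prod_const_one, mul_one, Finset.prod_pow_eq_pow_sum]
  rw [h, map_sum, pc, Finset.card_filter]
  push_cast
  simp only [coeff_X_pow]
  exact Finset.sum_congr rfl fun T _ => by simp [eq_comm]




lemma two_eq_zero : (2 : PowerSeries R2) = 0 := by
  have h := map_natCast (C (R := R2)) 2
  have h2 : ((2:ℕ) : R2) = 0 := by decide
  rw [h2, map_zero] at h
  rw [show ((2:ℕ):PowerSeries R2) = (2:PowerSeries R2) by norm_num] at h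
  rw [← h]

lemma sub_to_add (k : ℕ) : (1 : PowerSeries R2) - X^k = 1 + X^k := by
  have h := two_eq_zero
  linear_combination (-(X:PowerSeries R2)^k) * h

lemma sq_fact (k : ℕ) : ((1 : PowerSeries R2) + X^k)^2 = 1 + X^(2*k) := by
  have h := two_eq_zero
  have : (2*k) = k + k := by ring
  rw [this, pow_add]
  linear_combination ((X:PowerSeries R2)^k) * h

lemma prod_range_to_Icc {M : Type*} [CommMonoid M] (f : ℕ → M) (n : ℕ) :
    ∏ k ∈ range n, f (k+1) = ∏ i ∈ Icc 1 n, f i := by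
  induction n with
  | zero => simp
  | succ n ih => rw [Finset.prod_range_succ, ih, Finset.prod_Icc_succ_top (by omega)]

lemma prod_three {M : Type*} [CommMonoid M] (f : ℕ → M) (n : ℕ) :
    ∏ k ∈ range (3*n), f k = ∏ i ∈ range n, (f (3*i) * f (3*i+1) * f (3*i+2)) := by
  induction n with
  | zero => simp
  | succ n ih =>
      have h3 : 3*(n+1) = (3*n) + 1 + 1 + 1 := by ring
      rw [h3, Finset.prod_range_succ, Finset.prod_range_succ, Finset.prod_range_succ, ih,
        Finset.prod_range_succ]
      rw [mul_assoc, mul_assoc, mul_assoc]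



/-! ### generic even-cardinality-under-involution lemma -/

lemma even_card_invol {α : Type*} [DecidableEq α] (s : Finset α) (g : α → α)
    (h1 : ∀ x ∈ s, g x ∈ s) (h2 : ∀ x ∈ s, g (g x) = x) (h3 : ∀ x ∈ s, g x ≠ x) :
    Even s.card := by
  induction s using Finset.strongInduction with
  | H s ih =>
    rcases s.eq_empty_or_nonempty with rfl | ⟨x, hx⟩
    · simp
    · have hgx : g x ∈ s := h1 x hx
      have hne : g x ≠ x := h3 x hx
      have hgx' : g x ∈ s.erase x := Finset.mem_erase.2 ⟨hne, hgx⟩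
      set t := (s.erase x).erase (g x) with ht
      have htsub : t ⊆ s := fun y hy =>
        Finset.erase_subset _ _ (Finset.erase_subset _ _ hy)
      have htx : x ∉ t := by
        intro hxt
        exact (Finset.mem_erase.1 (Finset.mem_erase.1 hxt).2).1 rfl
      have hss : t ⊂ s := (Finset.ssubset_iff_of_subset htsub).2 ⟨x, hx, htx⟩
      have hmem : ∀ y ∈ t, y ∈ s ∧ y ≠ x ∧ y ≠ g x := by
        intro y hy
        have h' := Finset.mem_erase.1 hy
        have h'' := Finset.mem_erase.1 h'.2
        exact ⟨h''.2, h''.1, h'.1⟩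
      have hcard : s.card = t.card + 2 := by
        have c1 : (s.erase x).card + 1 = s.card := Finset.card_erase_add_one hx
        have c2 : t.card + 1 = (s.erase x).card := Finset.card_erase_add_one hgx'
        omega
      have heven : Even t.card := by
        refine ih t hss (fun y hy => ?_) (fun y hy => h2 y (hmem y hy).1)
          (fun y hy => h3 y (hmem y hy).1)
        obtain ⟨hys, hyx, hygx⟩ := hmem y hy
        refine Finset.mem_erase.2 ⟨?_, Finset.mem_erase.2 ⟨?_, h1 y hys⟩⟩
        · intro hgy
          exact hyx (by rw [← h2 y hys, hgy, h2 x hx])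
        · intro hgy
          exact hygx (by rw [← h2 y hys, hgy])
      rw [hcard, Nat.even_add]
      simpa using heven

/-! ### the Franklin involution -/

def aval (T : Finset ℕ) (h : T.Nonempty) : ℕ :=
  (T.filter (fun x => Finset.Icc x (T.max' h) ⊆ T)).min'
    ⟨T.max' h, Finset.mem_filter.2 ⟨T.max'_mem h, by
      rw [Finset.Icc_self, Finset.singleton_subset_iff]; exact T.max'_mem h⟩⟩

def fr (T : Finset ℕ) : Finset ℕ :=
  if h : T.Nonempty then
    if T.min' h + aval T h ≤ T.max' h + 1 then
      insert (T.max' h + 1) ((T.erase (T.min' h)).erase (T.max' h + 1 - T.min' h))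
    else
      insert (T.max' h + 1 - aval T h) (insert (aval T h - 1) (T.erase (T.max' h)))
  else ∅

lemma fr_case1 (T : Finset ℕ) (h : T.Nonempty)
    (hc : T.min' h + aval T h ≤ T.max' h + 1) :
    fr T = insert (T.max' h + 1) ((T.erase (T.min' h)).erase (T.max' h + 1 - T.min' h)) := by
  rw [fr, dif_pos h, if_pos hc]

lemma fr_case2 (T : Finset ℕ) (h : T.Nonempty)
    (hc : ¬ (T.min' h + aval T h ≤ T.max' h + 1)) :
    fr T = insert (T.max' h + 1 - aval T h) (insert (aval T h - 1) (T.erase (T.max' h))) := by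
  rw [fr, dif_pos h, if_neg hc]

lemma max'_eq {T : Finset ℕ} (hne : T.Nonempty) {b : ℕ} (hb : b ∈ T)
    (hall : ∀ x ∈ T, x ≤ b) : T.max' hne = b :=
  le_antisymm (Finset.max'_le _ _ _ hall) (Finset.le_max' _ _ hb)

lemma min'_eq {T : Finset ℕ} (hne : T.Nonempty) {b : ℕ} (hb : b ∈ T)
    (hall : ∀ x ∈ T, b ≤ x) : T.min' hne = b :=
  le_antisymm (Finset.min'_le _ _ hb) (Finset.le_min' _ _ _ hall)

lemma aval_mem (T : Finset ℕ) (h : T.Nonempty) : aval T h ∈ T := by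
  have := Finset.min'_mem (T.filter (fun x => Finset.Icc x (T.max' h) ⊆ T))
    ⟨T.max' h, Finset.mem_filter.2 ⟨T.max'_mem h, by
      rw [Finset.Icc_self, Finset.singleton_subset_iff]; exact T.max'_mem h⟩⟩
  exact (Finset.mem_filter.1 this).1

lemma aval_icc (T : Finset ℕ) (h : T.Nonempty) :
    Finset.Icc (aval T h) (T.max' h) ⊆ T := by
  have := Finset.min'_mem (T.filter (fun x => Finset.Icc x (T.max' h) ⊆ T))
    ⟨T.max' h, Finset.mem_filter.2 ⟨T.max'_mem h, by
      rw [Finset.Icc_self, Finset.singleton_subset_iff]; exact T.max'_mem h⟩⟩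
  exact (Finset.mem_filter.1 this).2

lemma aval_min (T : Finset ℕ) (h : T.Nonempty) {x : ℕ} (hx : x ∈ T)
    (hicc : Finset.Icc x (T.max' h) ⊆ T) : aval T h ≤ x :=
  Finset.min'_le _ _ (Finset.mem_filter.2 ⟨hx, hicc⟩)

lemma aval_char (T : Finset ℕ) (h : T.Nonempty) (h0 : 0 ∉ T) {b : ℕ}
    (hb : b ∈ T) (h1 : Finset.Icc b (T.max' h) ⊆ T) (h2 : b - 1 ∉ T) :
    aval T h = b := by
  refine le_antisymm (aval_min T h hb h1) ?_
  by_contra hlt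
  push_neg at hlt
  have hb1 : 1 ≤ b := by
    rcases Nat.eq_zero_or_pos b with rfl | h'
    · exact absurd hb h0
    · exact h'
  have hbm : b ≤ T.max' h := Finset.le_max' _ _ hb
  have : b - 1 ∈ Finset.Icc (aval T h) (T.max' h) :=
    Finset.mem_Icc.2 ⟨by omega, by omega⟩
  exact h2 (aval_icc T h this)

lemma aval_pred_not_mem (T : Finset ℕ) (h : T.Nonempty) (h0 : 0 ∉ T) :
    aval T h - 1 ∉ T := by
  intro hmem
  have hmem0 := aval_mem T h
  have h1 : 1 ≤ aval T h := by
    rcases Nat.eq_zero_or_pos (aval T h) with h' | h'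
    · rw [h'] at hmem0; exact absurd hmem0 h0
    · exact h'
  have hicc : Finset.Icc (aval T h - 1) (T.max' h) ⊆ T := by
    intro x hx
    have hx' := Finset.mem_Icc.1 hx
    rcases Nat.eq_or_lt_of_le hx'.1 with heq | hlt
    · rw [← heq]; exact hmem
    · exact aval_icc T h (Finset.mem_Icc.2 ⟨by omega, hx'.2⟩)
  have := aval_min T h hmem hicc
  omega

lemma full_staircase (T : Finset ℕ) (h : T.Nonempty)
    (hs : aval T h = T.min' h) : T = Finset.Icc (T.min' h) (T.max' h) := by
  apply Finset.Subset.antisymm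
  · intro x hx
    exact Finset.mem_Icc.2 ⟨Finset.min'_le _ _ hx, Finset.le_max' _ _ hx⟩
  · rw [← hs]
    exact aval_icc T h


lemma caseA (T : Finset ℕ) (hne : T.Nonempty) (h0 : 0 ∉ T)
    (hc : T.min' hne + aval T hne ≤ T.max' hne + 1)
    (hm2s : 2 * T.min' hne ≤ T.max' hne) :
    0 ∉ fr T ∧ (∑ i ∈ fr T, i = ∑ i ∈ T, i) ∧ fr (fr T) = T ∧ T.min' hne ∉ fr T := by
  have hsT : T.min' hne ∈ T := T.min'_mem hne
  have hmT : T.max' hne ∈ T := T.max'_mem hne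
  have haT : aval T hne ∈ T := aval_mem T hne
  set m := T.max' hne with hm
  set s := T.min' hne with hs
  set a := aval T hne with ha
  have hs1 : 1 ≤ s := by
    rcases Nat.eq_zero_or_pos s with h | h
    · rw [h] at hsT; exact absurd hsT h0
    · exact h
  have hsm : s ≤ m := Finset.min'_le _ _ hmT
  have hsa : s ≤ a := Finset.min'_le _ _ haT
  have ham : a ≤ m := Finset.le_max' _ _ haT
  set u := m + 1 - s with hu
  have hus : s + 1 ≤ u := by omega
  have hum : u ≤ m := by omega
  have huT : u ∈ T := aval_icc T hne (Finset.mem_Icc.2 ⟨by omega, by omega⟩)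
  have hm1T : m + 1 ∉ T := fun hmem => by have := Finset.le_max' T _ hmem; omega
  have hu_es : u ∈ T.erase s := Finset.mem_erase.2 ⟨by omega, huT⟩
  have hm1_not : m + 1 ∉ (T.erase s).erase u := fun hmem =>
    hm1T (Finset.mem_of_mem_erase (Finset.mem_of_mem_erase hmem))
  have hfr : fr T = insert (m+1) ((T.erase s).erase u) := fr_case1 T hne hc
  have hminT : ∀ x ∈ T, s ≤ x := fun x hx => Finset.min'_le _ _ hx
  have hmaxT : ∀ x ∈ T, x ≤ m := fun x hx => Finset.le_max' _ _ hx
  have helem : ∀ x ∈ fr T, x = m + 1 ∨ (x ∈ T ∧ x ≠ s ∧ x ≠ u) := by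
    intro x hx
    rw [hfr] at hx
    rcases Finset.mem_insert.1 hx with h | h
    · exact Or.inl h
    · have h1 := Finset.mem_erase.1 h
      have h2 := Finset.mem_erase.1 h1.2
      exact Or.inr ⟨h2.2, h2.1, h1.1⟩
  have hmem' : ∀ x, x ∈ T → x ≠ s → x ≠ u → x ∈ fr T := by
    intro x hxT hxs hxu
    rw [hfr]
    exact Finset.mem_insert_of_mem (Finset.mem_erase.2 ⟨hxu, Finset.mem_erase.2 ⟨hxs, hxT⟩⟩)
  have hm1mem : m + 1 ∈ fr T := by rw [hfr]; exact Finset.mem_insert_self _ _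
  -- 0 ∉ fr T
  have hzero : 0 ∉ fr T := by
    intro hmem
    rcases helem 0 hmem with h | h
    · omega
    · exact h0 h.1
  -- sum
  have hsum : ∑ i ∈ fr T, i = ∑ i ∈ T, i := by
    have e0 : ∑ i ∈ fr T, i = (m+1) + ∑ i ∈ (T.erase s).erase u, i := by
      rw [hfr]; exact Finset.sum_insert hm1_not
    have e1 : (∑ i ∈ (T.erase s).erase u, i) + u = ∑ i ∈ T.erase s, i :=
      Finset.sum_erase_add _ _ hu_es
    have e2 : (∑ i ∈ T.erase s, i) + s = ∑ i ∈ T, i :=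
      Finset.sum_erase_add _ _ hsT
    omega
  -- fr T is nonempty etc.
  have hne1 : (fr T).Nonempty := ⟨m+1, hm1mem⟩
  have hmax1 : (fr T).max' hne1 = m + 1 := by
    refine max'_eq hne1 hm1mem fun x hx => ?_
    rcases helem x hx with h | h
    · omega
    · exact le_trans (hmaxT x h.1) (by omega)
  have hmin1 : s + 1 ≤ (fr T).min' hne1 := by
    have hmm := (fr T).min'_mem hne1
    rcases helem _ hmm with h | h
    · omega
    · have := hminT _ h.1; have := h.2.1; omega
  have haval1 : aval (fr T) hne1 = u + 1 := by
    refine aval_char (fr T) hne1 hzero ?_ ?_ ?_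
    · -- u + 1 ∈ fr T
      rcases Nat.lt_or_ge u m with hlt | hge
      · refine hmem' (u+1) ?_ (by omega) (by omega)
        exact aval_icc T hne (Finset.mem_Icc.2 ⟨by omega, by omega⟩)
      · have : u = m := by omega
        rw [this]; exact hm1mem
    · -- Icc (u+1) max' ⊆ fr T
      rw [hmax1]
      intro x hx
      have hx' := Finset.mem_Icc.1 hx
      rcases Nat.lt_or_ge x (m+1) with hlt | hge
      · refine hmem' x ?_ (by omega) (by omega)
        exact aval_icc T hne (Finset.mem_Icc.2 ⟨by omega, by omega⟩)
      · have : x = m + 1 := by omega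
        rw [this]; exact hm1mem
    · -- u + 1 - 1 ∉ fr T
      have : u + 1 - 1 = u := by omega
      rw [this]
      intro hmem
      rcases helem u hmem with h | h
      · omega
      · exact h.2.2 rfl
  have hcond1 : ¬ ((fr T).min' hne1 + aval (fr T) hne1 ≤ (fr T).max' hne1 + 1) := by
    rw [haval1, hmax1]; omega
  have hback : fr (fr T) = T := by
    rw [fr_case2 (fr T) hne1 hcond1, hmax1, haval1]
    have er1 : (fr T).erase (m+1) = (T.erase s).erase u := by
      rw [hfr]; exact Finset.erase_insert hm1_not
    rw [er1, show m + 1 + 1 - (u + 1) = s by omega, show u + 1 - 1 = u by omega,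
      Finset.insert_erase hu_es, Finset.insert_erase hsT]
  have hsnot : s ∉ fr T := by
    intro hmem
    rcases helem s hmem with h | h
    · omega
    · exact h.2.1 rfl
  exact ⟨hzero, hsum, hback, hsnot⟩

lemma caseB (T : Finset ℕ) (hne : T.Nonempty) (h0 : 0 ∉ T)
    (hc : ¬ (T.min' hne + aval T hne ≤ T.max' hne + 1))
    (hexc : T.max' hne + 2 ≠ 2 * aval T hne) :
    0 ∉ fr T ∧ (∑ i ∈ fr T, i = ∑ i ∈ T, i) ∧ fr (fr T) = T ∧
      (T.max' hne + 1 - aval T hne) ∉ T ∧ (T.max' hne + 1 - aval T hne) ∈ fr T := by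
  have hsT : T.min' hne ∈ T := T.min'_mem hne
  have hmT : T.max' hne ∈ T := T.max'_mem hne
  have haT : aval T hne ∈ T := aval_mem T hne
  have haIcc := aval_icc T hne
  set m := T.max' hne with hm
  set s := T.min' hne with hs
  set a := aval T hne with ha
  have hs1 : 1 ≤ s := by
    rcases Nat.eq_zero_or_pos s with h | h
    · rw [h] at hsT; exact absurd hsT h0
    · exact h
  have hsm : s ≤ m := Finset.min'_le _ _ hmT
  have hsa : s ≤ a := Finset.min'_le _ _ haT
  have ham : a ≤ m := Finset.le_max' _ _ haT
  have hminT : ∀ x ∈ T, s ≤ x := fun x hx => Finset.min'_le _ _ hx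
  have hmaxT : ∀ x ∈ T, x ≤ m := fun x hx => Finset.le_max' _ _ hx
  have hc' : m + 2 ≤ s + a := by omega
  have ha2 : 2 ≤ a := by omega
  set q := m + 1 - a with hq
  have hq1 : 1 ≤ q := by omega
  have hqs : q + 1 ≤ s := by omega
  have hqa : q + 1 ≤ a - 1 := by omega  -- q < a - 1 since m + 2 ≠ 2a
  have ha1T : a - 1 ∉ T := by
    have := aval_pred_not_mem T hne h0
    rwa [← ha] at this
  have hqT : q ∉ T := fun hmem => by have := hminT _ hmem; omega
  have ha1_em : a - 1 ∉ T.erase m := fun hmem => ha1T (Finset.mem_of_mem_erase hmem)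
  have hq_not : q ∉ insert (a-1) (T.erase m) := by
    intro hmem
    rcases Finset.mem_insert.1 hmem with h | h
    · omega
    · exact hqT (Finset.mem_of_mem_erase h)
  have hfr : fr T = insert q (insert (a-1) (T.erase m)) := fr_case2 T hne hc
  have helem : ∀ x ∈ fr T, x = q ∨ x = a - 1 ∨ (x ∈ T ∧ x ≠ m) := by
    intro x hx
    rw [hfr] at hx
    rcases Finset.mem_insert.1 hx with h | h
    · exact Or.inl h
    · rcases Finset.mem_insert.1 h with h' | h'
      · exact Or.inr (Or.inl h')
      · have := Finset.mem_erase.1 h'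
        exact Or.inr (Or.inr ⟨this.2, this.1⟩)
  have hmem' : ∀ x, x ∈ T → x ≠ m → x ∈ fr T := by
    intro x hxT hxm
    rw [hfr]
    exact Finset.mem_insert_of_mem (Finset.mem_insert_of_mem (Finset.mem_erase.2 ⟨hxm, hxT⟩))
  have hqmem : q ∈ fr T := by rw [hfr]; exact Finset.mem_insert_self _ _
  have ha1mem : a - 1 ∈ fr T := by
    rw [hfr]; exact Finset.mem_insert_of_mem (Finset.mem_insert_self _ _)
  -- 0 ∉ fr T
  have hzero : 0 ∉ fr T := by
    intro hmem
    rcases helem 0 hmem with h | h | h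
    · omega
    · omega
    · exact h0 h.1
  -- sum
  have hsum : ∑ i ∈ fr T, i = ∑ i ∈ T, i := by
    have e0 : ∑ i ∈ fr T, i = q + ∑ i ∈ insert (a-1) (T.erase m), i := by
      rw [hfr]; exact Finset.sum_insert hq_not
    have e1 : ∑ i ∈ insert (a-1) (T.erase m), i = (a-1) + ∑ i ∈ T.erase m, i :=
      Finset.sum_insert ha1_em
    have e2 : (∑ i ∈ T.erase m, i) + m = ∑ i ∈ T, i :=
      Finset.sum_erase_add _ _ hmT
    omega
  have hne1 : (fr T).Nonempty := ⟨q, hqmem⟩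
  have hmax1 : (fr T).max' hne1 = m - 1 := by
    refine max'_eq hne1 ?_ fun x hx => ?_
    · rcases Nat.lt_or_ge a m with hlt | hge
      · exact hmem' (m-1) (haIcc (Finset.mem_Icc.2 ⟨by omega, by omega⟩)) (by omega)
      · have : a - 1 = m - 1 := by omega
        rw [← this]; exact ha1mem
    · rcases helem x hx with h | h | h
      · omega
      · omega
      · have := hmaxT _ h.1; have := h.2; omega
  have hmin1 : (fr T).min' hne1 = q := by
    refine min'_eq hne1 hqmem fun x hx => ?_
    rcases helem x hx with h | h | h
    · omega
    · omega
    · have := hminT _ h.1; omega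
  have haval1 : aval (fr T) hne1 ≤ a - 1 := by
    refine aval_min (fr T) hne1 ha1mem ?_
    rw [hmax1]
    intro x hx
    have hx' := Finset.mem_Icc.1 hx
    rcases Nat.eq_or_lt_of_le hx'.1 with heq | hlt
    · rw [← heq]; exact ha1mem
    · exact hmem' x (haIcc (Finset.mem_Icc.2 ⟨by omega, by omega⟩)) (by omega)
  have hcond1 : (fr T).min' hne1 + aval (fr T) hne1 ≤ (fr T).max' hne1 + 1 := by
    rw [hmin1, hmax1]; omega
  have hback : fr (fr T) = T := by
    rw [fr_case1 (fr T) hne1 hcond1, hmax1, hmin1]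
    have er1 : (fr T).erase q = insert (a-1) (T.erase m) := by
      rw [hfr]; exact Finset.erase_insert hq_not
    rw [er1, show m - 1 + 1 - q = a - 1 by omega, Finset.erase_insert ha1_em,
      show m - 1 + 1 = m by omega, Finset.insert_erase hmT]
  exact ⟨hzero, hsum, hback, hqT, hqmem⟩

lemma sum_Icc_identity {s m : ℕ} (h : s ≤ m + 1) :
    (∑ i ∈ Icc s m, i) * 2 + s * (s - 1) = m * (m + 1) := by
  have hsplit := Finset.sum_Ico_consecutive (fun i => i) (Nat.zero_le s) h
  have h1 : Finset.Ico s (m+1) = Finset.Icc s m := by rw [Finset.Ico_add_one_right_eq_Icc]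
  have h2 : (∑ i ∈ Finset.range s, i) * 2 = s * (s-1) := Finset.sum_range_id_mul_two s
  have h3 : (∑ i ∈ Finset.range (m+1), i) * 2 = (m+1) * m := Finset.sum_range_id_mul_two (m+1)
  rw [Finset.range_eq_Ico] at h2 h3
  rw [h1] at hsplit
  calc (∑ i ∈ Icc s m, i) * 2 + s * (s-1)
      = (∑ i ∈ Finset.Ico 0 s, i + ∑ i ∈ Finset.Icc s m, i) * 2 := by rw [← h2]; ring
    _ = (∑ i ∈ Finset.Ico 0 (m+1), i) * 2 := by rw [hsplit]
    _ = (m+1) * m := h3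
    _ = m * (m+1) := mul_comm _ _

lemma fr_main (T : Finset ℕ) (hne : T.Nonempty) (h0 : 0 ∉ T)
    (hpent : ∀ k : ℕ, 1 ≤ k →
      2 * (∑ i ∈ T, i) ≠ k * (3*k-1) ∧ 2 * (∑ i ∈ T, i) ≠ k * (3*k+1)) :
    0 ∉ fr T ∧ (∑ i ∈ fr T, i = ∑ i ∈ T, i) ∧ fr (fr T) = T ∧ fr T ≠ T := by
  have hsT : T.min' hne ∈ T := T.min'_mem hne
  have hmT : T.max' hne ∈ T := T.max'_mem hne
  have haT : aval T hne ∈ T := aval_mem T hne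
  have hs1 : 1 ≤ T.min' hne := by
    rcases Nat.eq_zero_or_pos (T.min' hne) with h' | h'
    · rw [h'] at hsT; exact absurd hsT h0
    · exact h'
  have hsm : T.min' hne ≤ T.max' hne := Finset.min'_le _ _ hmT
  have hsa : T.min' hne ≤ aval T hne := Finset.min'_le _ _ haT
  have ham : aval T hne ≤ T.max' hne := Finset.le_max' _ _ haT
  by_cases hc : T.min' hne + aval T hne ≤ T.max' hne + 1
  · have hm2s : 2 * T.min' hne ≤ T.max' hne := by
      by_contra hcon
      push_neg at hcon
      have hmeq : T.max' hne + 1 = 2 * T.min' hne := by omega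
      have haeq : aval T hne = T.min' hne := by omega
      have hTfull := full_staircase T hne haeq
      have hsum := sum_Icc_identity (s := T.min' hne) (m := T.max' hne) (by omega)
      rw [← hTfull] at hsum
      apply (hpent (T.min' hne) hs1).1
      zify [show 1 ≤ T.min' hne from hs1, show 1 ≤ 3 * T.min' hne by omega] at hsum ⊢
      have hmz : (T.max' hne : ℤ) + 1 = 2 * (T.min' hne : ℤ) := by exact_mod_cast hmeq
      linear_combination hsum + ((T.max' hne : ℤ) + 2 * (T.min' hne : ℤ)) * hmz
    obtain ⟨hz, hsum, hback, hmem⟩ := caseA T hne h0 hc hm2s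
    exact ⟨hz, hsum, hback, fun he => hmem (by rw [he]; exact T.min'_mem hne)⟩
  · have hexc : T.max' hne + 2 ≠ 2 * aval T hne := by
      intro hmeq
      have hseq : T.min' hne = aval T hne := by omega
      have hTfull := full_staircase T hne hseq.symm
      have hs2 : 2 ≤ T.min' hne := by omega
      have hsum := sum_Icc_identity (s := T.min' hne) (m := T.max' hne) (by omega)
      rw [← hTfull] at hsum
      apply (hpent (T.min' hne - 1) (by omega)).2
      zify [show 1 ≤ T.min' hne from hs1] at hsum ⊢
      have hmz : (T.max' hne : ℤ) + 2 = 2 * (T.min' hne : ℤ) := by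
        rw [hseq]; exact_mod_cast hmeq
      linear_combination hsum + ((T.max' hne : ℤ) + 2 * (T.min' hne : ℤ) - 1) * hmz
    obtain ⟨hz, hsum, hback, hqT, hqmem⟩ := caseB T hne h0 hc hexc
    exact ⟨hz, hsum, hback, fun he => hqT (by rw [he] at hqmem; exact hqmem)⟩


lemma franklin_even (N : ℕ) (hN : 1 ≤ N)
    (hpent : ∀ k : ℕ, 1 ≤ k → 2*N ≠ k*(3*k-1) ∧ 2*N ≠ k*(3*k+1)) :
    Even (pc N N) := by
  have main : ∀ T ∈ (Icc 1 N).powerset.filter (fun T => ∑ i ∈ T, i = N),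
      (fr T ∈ (Icc 1 N).powerset.filter (fun T => ∑ i ∈ T, i = N)) ∧
      fr (fr T) = T ∧ fr T ≠ T := by
    intro T hT
    have hT' := Finset.mem_filter.1 hT
    have hsub := Finset.mem_powerset.1 hT'.1
    have hsumT : ∑ i ∈ T, i = N := hT'.2
    have h0 : 0 ∉ T := fun h => by have := (Finset.mem_Icc.1 (hsub h)).1; omega
    have hne : T.Nonempty := by
      rcases T.eq_empty_or_nonempty with rfl | h
      · simp at hsumT; omega
      · exact h
    have hpent' : ∀ k : ℕ, 1 ≤ k →
        2 * (∑ i ∈ T, i) ≠ k * (3*k-1) ∧ 2 * (∑ i ∈ T, i) ≠ k * (3*k+1) := by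
      intro k hk; rw [hsumT]; exact hpent k hk
    obtain ⟨hz, hsum, hback, hneq⟩ := fr_main T hne h0 hpent'
    refine ⟨Finset.mem_filter.2 ⟨Finset.mem_powerset.2 ?_, by rw [hsum, hsumT]⟩, hback, hneq⟩
    exact subset_of_sum hz (by rw [hsum, hsumT])
  exact even_card_invol _ fr (fun T h => (main T h).1) (fun T h => (main T h).2.1)
    (fun T h => (main T h).2.2)






lemma key (C : ℕ → ℤ)
    (hC : ∀ N : ℕ, PowerSeries.coeff (R := ℤ) N
      ((PowerSeries.mk fun n => C n) *
        ∏ n ∈ Finset.range (N + 1), (1 - (PowerSeries.X : PowerSeries ℤ) ^ (n + 1))) =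
      PowerSeries.coeff (R := ℤ) N
      (∏ n ∈ Finset.range (N + 1),
        ((1 - (PowerSeries.X : PowerSeries ℤ) ^ (6 * (n + 1))) *
          (1 + PowerSeries.X ^ (6 * n + 2)) * (1 + PowerSeries.X ^ (6 * n + 4)))))
    (N : ℕ) :
    coeff (R := R2) N ((mk fun n => ((C n : ℤ) : R2)) * AM (N+1)) = coeff (R := R2) N (AM (3*N+3) ^ 2) := by
  have h := congrArg (fun z : ℤ => (z : R2)) (hC N)
  simp only [← Int.coe_castRingHom (α := R2), ← PowerSeries.coeff_map (f := Int.castRingHom R2)] at h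
  simp only [map_mul, map_prod, map_sub, map_add, map_one, map_pow, PowerSeries.map_X] at h
  have hmk : PowerSeries.map (Int.castRingHom R2) (mk fun n => C n)
      = mk fun n => ((C n : ℤ) : R2) := by
    ext n; simp [PowerSeries.coeff_map]
  rw [hmk] at h
  -- LHS
  have hL : (∏ n ∈ Finset.range (N + 1), ((1:PowerSeries R2) - X ^ (n + 1))) = AM (N+1) := by
    rw [show (∏ n ∈ Finset.range (N + 1), ((1:PowerSeries R2) - X ^ (n + 1)))
        = ∏ n ∈ Finset.range (N + 1), ((1:PowerSeries R2) + X ^ (n + 1)) from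
      Finset.prod_congr rfl fun n _ => sub_to_add _]
    exact prod_range_to_Icc (fun i => 1 + X ^ i) (N+1)
  -- RHS
  have hR : (∏ n ∈ Finset.range (N + 1),
      (((1:PowerSeries R2) - X ^ (6 * (n + 1))) * (1 + X ^ (6 * n + 2)) * (1 + X ^ (6 * n + 4))))
      = AM (3*N+3) ^ 2 := by
    have e1 : ∀ n, ((1:PowerSeries R2) - X ^ (6 * (n + 1))) * (1 + X ^ (6 * n + 2)) *
        (1 + X ^ (6 * n + 4)) = (fun k => (1:PowerSeries R2) + X ^ (2*k+2)) (3*n) *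
        (fun k => (1:PowerSeries R2) + X ^ (2*k+2)) (3*n+1) *
        (fun k => (1:PowerSeries R2) + X ^ (2*k+2)) (3*n+2) := by
      intro n
      rw [sub_to_add]
      simp only []
      rw [show 6*(n+1) = 2*(3*n+2)+2 by ring, show 6*n+2 = 2*(3*n)+2 by ring,
        show 6*n+4 = 2*(3*n+1)+2 by ring]
      ring
    rw [Finset.prod_congr rfl fun n _ => e1 n, ← prod_three (fun k => 1 + X ^ (2*k+2)) (N+1)]
    rw [show 3*(N+1) = 3*N+3 by ring]
    have e2 : ∀ k, ((1:PowerSeries R2) + X ^ (2*k+2)) = ((1:PowerSeries R2) + X ^ (k+1))^2 := by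
      intro k; rw [sq_fact, show 2*(k+1) = 2*k+2 by ring]
    rw [Finset.prod_congr rfl fun k _ => e2 k, Finset.prod_pow]
    rw [prod_range_to_Icc (fun i => (1:PowerSeries R2) + X ^ i) (3*N+3)]
    rfl
  rw [hL, hR] at h
  exact h

noncomputable def A : PowerSeries R2 := mk fun n => (pc n n : R2)

lemma coeff_A_eq {j M : ℕ} (h : j ≤ M) : coeff (R := R2) j (AM M) = coeff (R := R2) j A := by
  rw [coeff_AM, A, coeff_mk, pc_stab h]

lemma C_eq_pc (C : ℕ → ℤ)
    (hC : ∀ N : ℕ, PowerSeries.coeff (R := ℤ) N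
      ((PowerSeries.mk fun n => C n) *
        ∏ n ∈ Finset.range (N + 1), (1 - (PowerSeries.X : PowerSeries ℤ) ^ (n + 1))) =
      PowerSeries.coeff (R := ℤ) N
      (∏ n ∈ Finset.range (N + 1),
        ((1 - (PowerSeries.X : PowerSeries ℤ) ^ (6 * (n + 1))) *
          (1 + PowerSeries.X ^ (6 * n + 2)) * (1 + PowerSeries.X ^ (6 * n + 4)))))
    (N : ℕ) : ((C N : ℤ) : R2) = (pc N N : R2) := by
  have hmain : (mk fun n => ((C n : ℤ) : R2)) * A = A * A := by
    ext N
    rw [PowerSeries.coeff_mul, PowerSeries.coeff_mul]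
    have h1 : ∑ p ∈ antidiagonal N, coeff (R := R2) p.1 (mk fun n => ((C n : ℤ) : R2)) * coeff (R := R2) p.2 A
        = coeff (R := R2) N ((mk fun n => ((C n : ℤ) : R2)) * AM (N+1)) := by
      rw [PowerSeries.coeff_mul]
      refine Finset.sum_congr rfl fun p hp => ?_
      have hp2 : p.2 ≤ N := by
        have := Finset.HasAntidiagonal.mem_antidiagonal.1 hp; omega
      rw [coeff_A_eq (by omega : p.2 ≤ N+1)]
    have h2 : ∑ p ∈ antidiagonal N, coeff (R := R2) p.1 A * coeff (R := R2) p.2 A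
        = coeff (R := R2) N (AM (3*N+3) ^ 2) := by
      rw [sq, PowerSeries.coeff_mul]
      refine Finset.sum_congr rfl fun p hp => ?_
      have := Finset.HasAntidiagonal.mem_antidiagonal.1 hp
      rw [coeff_A_eq (by omega : p.1 ≤ 3*N+3), coeff_A_eq (by omega : p.2 ≤ 3*N+3)]
    rw [h1, h2, key C hC N]
  have hA0 : A ≠ 0 := by
    intro h0
    have : coeff (R := R2) 0 A = 1 := by
      rw [A, coeff_mk]
      have : pc 0 0 = 1 := by decide
      rw [this]; norm_num
    rw [h0] at this; simp at this
  have := mul_right_cancel₀ hA0 hmain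
  calc ((C N : ℤ) : R2) = coeff (R := R2) N (mk fun n => ((C n : ℤ) : R2)) := by rw [coeff_mk]
    _ = coeff (R := R2) N A := by rw [this]
    _ = (pc N N : R2) := by rw [A, coeff_mk]


end C62Aux

open C62Aux in
/-- If `p ≥ 5` is prime, `1 ≤ r ≤ p - 1`, and `24r + 1` is a quadratic nonresidue mod
`p`, then `C̄₆₂(pm + r) ≡ 0 (mod 2)` for all `m ≥ 0`. -/
theorem C62_nonresidue_mod_two (C : ℕ → ℤ)
    (hC : ∀ N : ℕ, PowerSeries.coeff (R := ℤ) N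
      ((PowerSeries.mk fun n => C n) *
        ∏ n ∈ Finset.range (N + 1), (1 - (PowerSeries.X : PowerSeries ℤ) ^ (n + 1))) =
      PowerSeries.coeff (R := ℤ) N
      (∏ n ∈ Finset.range (N + 1),
        ((1 - (PowerSeries.X : PowerSeries ℤ) ^ (6 * (n + 1))) *
          (1 + PowerSeries.X ^ (6 * n + 2)) * (1 + PowerSeries.X ^ (6 * n + 4)))))
    (p : ℕ) (hp : p.Prime) (hp5 : 5 ≤ p) (r : ℕ) (hr1 : 1 ≤ r) (hr2 : r ≤ p - 1)
    (hnr : ¬ ∃ x : ℤ, x ^ 2 ≡ 24 * (r : ℤ) + 1 [ZMOD p])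
    (m : ℕ) :
    C (p * m + r) ≡ 0 [ZMOD 2] := by
  have hCN := C_eq_pc C hC (p * m + r)
  have hNpos : 1 ≤ p * m + r := by omega
  have hpent : ∀ k : ℕ, 1 ≤ k →
      2 * (p * m + r) ≠ k * (3*k-1) ∧ 2 * (p * m + r) ≠ k * (3*k+1) := by
    intro k hk
    constructor
    · intro hEq
      apply hnr
      refine ⟨6 * (k:ℤ) - 1, ?_⟩
      zify [show 1 ≤ 3*k by omega] at hEq
      have key : (6*(k:ℤ) - 1)^2 - (24*(r:ℤ)+1) = (p:ℤ) * (24*m) := by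
        linear_combination (-12 : ℤ) * hEq
      exact Int.modEq_iff_dvd.2 ⟨-(24*m), by linear_combination -key⟩
    · intro hEq
      apply hnr
      refine ⟨6 * (k:ℤ) + 1, ?_⟩
      zify at hEq
      have key : (6*(k:ℤ) + 1)^2 - (24*(r:ℤ)+1) = (p:ℤ) * (24*m) := by
        linear_combination (-12 : ℤ) * hEq
      exact Int.modEq_iff_dvd.2 ⟨-(24*m), by linear_combination -key⟩
  have heven := franklin_even (p * m + r) hNpos hpent
  have hzero : ((pc (p * m + r) (p * m + r) : ℕ) : ZMod 2) = 0 :=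
    (ZMod.natCast_eq_zero_iff _ 2).2 heven.two_dvd
  have hC0 : ((C (p * m + r) : ℤ) : ZMod 2) = 0 := by rw [hCN]; exact hzero
  have hdvd : (2:ℤ) ∣ C (p * m + r) := by
    have := (ZMod.intCast_zmod_eq_zero_iff_dvd (C (p * m + r)) 2).1 hC0
    exact_mod_cast this
  exact Int.modEq_zero_iff_dvd.2 hdvd
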